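/- The Henneberg 0-extension move preserves (3,6)-tightness: if G is a (3,6)-tight finite graph and G' is obtained from G by adding a new vertex v of degree 3 adjacent to three distinct vertices of G, then G' is (3,6)-tight. -/
import Mathlib


/-- A finite simple graph given by a vertex set and an edge set of unordered pairs. -/
structure FinGraph (α : Type*) [DecidableEq α] where
  verts : Finset α
  edges : Finset (Sym2 α)
  edge_mem : ∀ e ∈ edges, ∀ x ∈ e, x ∈ verts
  not_diag : ∀ e ∈ edges, ¬ e.IsDiag

namespace FinGraph

variable {α : Type*} [DecidableEq α]

/-- The Maxwell count `f(G) = 3|V| - |E|`. -/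
def maxwell (G : FinGraph α) : ℤ := 3 * G.verts.card - G.edges.card

/-- `H` is a subgraph of `G`. -/
def IsSubgraph (H G : FinGraph α) : Prop := H.verts ⊆ G.verts ∧ H.edges ⊆ G.edges

/-- `G` is (3,6)-sparse. -/
def Sparse (G : FinGraph α) : Prop :=
  ∀ H : FinGraph α, H.IsSubgraph G → 3 ≤ H.verts.card → 6 ≤ H.maxwell

/-- `G` is (3,6)-tight. -/
def Tight (G : FinGraph α) : Prop := Sparse G ∧ G.maxwell = 6

end FinGraph

/-- the Henneberg 0-extension move preserves (3,6)-tightness. -/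
theorem henneberg_preserves_tight {α : Type*} [DecidableEq α]
    (G G' : FinGraph α) (v w₁ w₂ w₃ : α)
    (hG : G.Tight)
    (hv : v ∉ G.verts)
    (hw₁ : w₁ ∈ G.verts) (hw₂ : w₂ ∈ G.verts) (hw₃ : w₃ ∈ G.verts)
    (h12 : w₁ ≠ w₂) (h13 : w₁ ≠ w₃) (h23 : w₂ ≠ w₃)
    (hverts : G'.verts = insert v G.verts)
    (hedges : G'.edges = G.edges ∪ {s(v, w₁), s(v, w₂), s(v, w₃)}) :
    G'.Tight := by
  obtain ⟨hGs, hGm⟩ := hG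
  have hvw1 : v ≠ w₁ := fun h => hv (h ▸ hw₁)
  have hvw2 : v ≠ w₂ := fun h => hv (h ▸ hw₂)
  have hvw3 : v ≠ w₃ := fun h => hv (h ▸ hw₃)
  -- edges of G do not contain v
  have hvE : ∀ e ∈ G.edges, v ∉ e := fun e he hve => hv (G.edge_mem e he v hve)
  set T : Finset (Sym2 α) := {s(v, w₁), s(v, w₂), s(v, w₃)} with hT
  have hTv : ∀ e ∈ T, v ∈ e := by
    intro e he
    simp only [hT, Finset.mem_insert, Finset.mem_singleton] at he
    rcases he with h | h | h <;> simp [h]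
  have hdisj : Disjoint G.edges T := by
    rw [Finset.disjoint_left]
    intro e he heT
    exact hvE e he (hTv e heT)
  have hTcard : T.card = 3 := by
    rw [hT]
    rw [Finset.card_insert_of_notMem, Finset.card_insert_of_notMem, Finset.card_singleton]
    · simp only [Finset.mem_singleton, Sym2.eq_iff]
      push_neg
      exact ⟨fun _ => h23, fun h => absurd h hvw3⟩
    · simp only [Finset.mem_insert, Finset.mem_singleton, Sym2.eq_iff]
      push_neg
      exact ⟨⟨fun _ => h12, fun h => absurd h hvw2⟩,
             ⟨fun _ => h13, fun h => absurd h hvw3⟩⟩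
  have hE'card : G'.edges.card = G.edges.card + 3 := by
    rw [hedges, Finset.card_union_of_disjoint hdisj, hTcard]
  have hV'card : G'.verts.card = G.verts.card + 1 := by
    rw [hverts, Finset.card_insert_of_notMem hv]
  have hmax : G'.maxwell = 6 := by
    unfold FinGraph.maxwell at hGm ⊢
    rw [hE'card, hV'card]
    push_cast
    linarith
  refine ⟨?_, hmax⟩
  intro H hHsub hH3
  by_cases hvH : v ∉ H.verts
  · -- H is a subgraph of G
    have hEsub : H.edges ⊆ G.edges := by
      intro e he
      have := hHsub.2 he
      rw [hedges, Finset.mem_union] at this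
      rcases this with h | h
      · exact h
      · exact absurd (H.edge_mem e he v (hTv e h)) hvH
    have hVsub : H.verts ⊆ G.verts := by
      intro x hx
      have := hHsub.1 hx
      rw [hverts, Finset.mem_insert] at this
      rcases this with h | h
      · exact absurd (h ▸ hx) hvH
      · exact h
    exact hGs H ⟨hVsub, hEsub⟩ hH3
  · push_neg at hvH
    -- remove v from H
    set H' : FinGraph α :=
      { verts := H.verts.erase v
        edges := H.edges.filter (fun e => v ∉ e)
        edge_mem := by
          intro e he x hx
          simp only [Finset.mem_filter] at he
          refine Finset.mem_erase.mpr ⟨?_, H.edge_mem e he.1 x hx⟩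
          intro h
          exact he.2 (h ▸ hx)
        not_diag := fun e he => H.not_diag e (Finset.mem_filter.mp he).1 } with hH'
    have hV'sub : H'.verts ⊆ G.verts := by
      intro x hx
      rw [hH'] at hx
      simp only [Finset.mem_erase] at hx
      have := hHsub.1 hx.2
      rw [hverts, Finset.mem_insert] at this
      rcases this with h | h
      · exact absurd h hx.1
      · exact h
    have hE'sub : H'.edges ⊆ G.edges := by
      intro e he
      rw [hH'] at he
      simp only [Finset.mem_filter] at he
      have := hHsub.2 he.1
      rw [hedges, Finset.mem_union] at this
      rcases this with h | h
      · exact h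
      · exact absurd (hTv e h) he.2
    -- edge split of H
    have hsplit : H.edges.card =
        H'.edges.card + (H.edges.filter (fun e => v ∈ e)).card := by
      rw [hH']
      rw [← Finset.card_filter_add_card_filter_not (p := fun e => v ∉ e)]
      simp only [not_not]
    -- edges containing v inject into (H.verts.erase v)
    have hinj : (H.edges.filter (fun e => v ∈ e)) ⊆
        (H.verts.erase v).image (fun w => s(v, w)) := by
      intro e he
      simp only [Finset.mem_filter] at he
      obtain ⟨he1, he2⟩ := he
      obtain ⟨x, y⟩ := e
      rw [Sym2.mem_iff] at he2
      have hnd := H.not_diag _ he1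
      rw [Sym2.mk_isDiag_iff] at hnd
      rcases he2 with h | h
      · subst h
        refine Finset.mem_image.mpr ⟨y, ?_, rfl⟩
        exact Finset.mem_erase.mpr ⟨fun h => hnd h.symm, H.edge_mem _ he1 y (by simp)⟩
      · subst h
        refine Finset.mem_image.mpr ⟨x, ?_, ?_⟩
        · exact Finset.mem_erase.mpr ⟨fun h => hnd h, H.edge_mem _ he1 x (by simp)⟩
        · exact Sym2.eq_swap
    have hk_le_verts : (H.edges.filter (fun e => v ∈ e)).card ≤ H'.verts.card := by
      calc (H.edges.filter (fun e => v ∈ e)).card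
          ≤ ((H.verts.erase v).image (fun w => s(v, w))).card := Finset.card_le_card hinj
        _ ≤ (H.verts.erase v).card := Finset.card_image_le
        _ = H'.verts.card := by rw [hH']
    have hk_le_T : (H.edges.filter (fun e => v ∈ e)).card ≤ 3 := by
      have : (H.edges.filter (fun e => v ∈ e)) ⊆ T := by
        intro e he
        simp only [Finset.mem_filter] at he
        have := hHsub.2 he.1
        rw [hedges, Finset.mem_union] at this
        rcases this with h | h
        · exact absurd he.2 (hvE e h)
        · exact h
      calc _ ≤ T.card := Finset.card_le_card this
        _ = 3 := hTcard
    have hVc : H.verts.card = H'.verts.card + 1 := by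
      rw [hH']
      rw [Finset.card_erase_of_mem hvH]
      omega
    by_cases hV2 : 3 ≤ H'.verts.card
    · -- use sparsity of G on H'
      have h6 := hGs H' ⟨hV'sub, hE'sub⟩ hV2
      unfold FinGraph.maxwell at h6 ⊢
      rw [hVc, hsplit]
      push_cast
      push_cast at h6
      have := hk_le_T
      push_cast at this ⊢
      linarith
    · -- H'.verts.card = 2
      have hV'2 : H'.verts.card = 2 := by omega
      have hHc : H.verts.card = 3 := by omega
      -- H'.edges has at most 1 element: each edge is s(a,b) with a,b distinct in 2-set
      have hE'1 : H'.edges.card ≤ 1 := by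
        obtain ⟨a, b, hab, hab2⟩ := Finset.card_eq_two.mp hV'2
        have : H'.edges ⊆ {s(a, b)} := by
          intro e he
          obtain ⟨x, y⟩ := e
          have hx : x ∈ H'.verts := H'.edge_mem _ he x (by simp)
          have hy : y ∈ H'.verts := H'.edge_mem _ he y (by simp)
          have hnd := H'.not_diag _ he
          rw [Sym2.mk_isDiag_iff] at hnd
          rw [hab2] at hx hy
          simp only [Finset.mem_insert, Finset.mem_singleton] at hx hy
          simp only [Finset.mem_singleton, Sym2.eq_iff]
          rcases hx with rfl | rfl <;> rcases hy with rfl | rfl <;> tauto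
        calc _ ≤ ({s(a, b)} : Finset (Sym2 α)).card := Finset.card_le_card this
          _ = 1 := Finset.card_singleton _
      have hk2 : (H.edges.filter (fun e => v ∈ e)).card ≤ 2 := by omega
      unfold FinGraph.maxwell
      rw [hHc, hsplit]
      push_cast
      push_cast at hE'1 hk2
      linarith
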